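/- Let p be a prime and let M ∈ F_p[q] be a nonzero polynomial of degree d ≥ 1, and let q̄ denote the image of q in K = F_p[q]/⟨M⟩. Then q̄ is a unit of K whose multiplicative order is a power of p if and only if M = a·(q−1)^d for some nonzero a ∈ F_p. -/

import Mathlib

open Polynomial

/-- Let `M ∈ F_p[q]` be nonzero of degree `d ≥ 1` and let `q̄` be the image of
`q` in `K = F_p[q]/⟨M⟩`. Then `q̄` is a unit of `K` whose multiplicative order
is a power of `p` if and only if `M = a·(q-1)^d` for some nonzero `a ∈ F_p`. -/
theorem q_has_p_power_order_iff (p : ℕ) [Fact p.Prime]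
    (M : Polynomial (ZMod p)) (hM : M ≠ 0) (hdeg : 1 ≤ M.natDegree) :
    (IsUnit (Ideal.Quotient.mk (Ideal.span {M}) (Polynomial.X : Polynomial (ZMod p))) ∧
      ∃ t : ℕ,
        orderOf (Ideal.Quotient.mk (Ideal.span {M}) (Polynomial.X : Polynomial (ZMod p))) =
          p ^ t) ↔
      ∃ a : ZMod p, a ≠ 0 ∧
        M = Polynomial.C a * (Polynomial.X - 1) ^ M.natDegree := by
  have hp : p.Prime := Fact.out
  have key : ∀ n : ℕ,
      (Ideal.Quotient.mk (Ideal.span {M}) (X : Polynomial (ZMod p))) ^ n = 1 ↔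
        M ∣ (X : Polynomial (ZMod p)) ^ n - 1 := by
    intro n
    rw [← Ideal.mem_span_singleton, ← Ideal.Quotient.eq_zero_iff_mem, map_sub, map_one,
      map_pow, sub_eq_zero]
  have hfrob : ∀ t : ℕ, ((X : Polynomial (ZMod p)) - 1) ^ p ^ t =
      (X : Polynomial (ZMod p)) ^ p ^ t - 1 := by
    intro t
    rw [sub_pow_char_pow, one_pow]
  have hXprime : Prime ((X : Polynomial (ZMod p)) - 1) := by
    have := Polynomial.irreducible_X_sub_C (1 : ZMod p)
    rw [map_one] at this
    exact this.prime
  constructor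
  · rintro ⟨hu, t, ht⟩
    have h1 : (Ideal.Quotient.mk (Ideal.span {M}) (X : Polynomial (ZMod p))) ^ p ^ t = 1 := by
      rw [← ht]; exact pow_orderOf_eq_one _
    have h2 : M ∣ ((X : Polynomial (ZMod p)) - 1) ^ p ^ t := by
      rw [hfrob]; exact (key _).mp h1
    obtain ⟨i, _, hassoc⟩ := (dvd_prime_pow hXprime _).mp h2
    obtain ⟨u, hu'⟩ := hassoc.symm
    obtain ⟨a, ha, haC⟩ := Polynomial.isUnit_iff.mp u.isUnit
    have hMeq : M = C a * ((X : Polynomial (ZMod p)) - 1) ^ i := by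
      rw [← hu', haC, mul_comm]
    have hane : a ≠ 0 := ha.ne_zero
    have hdM : M.natDegree = i := by
      rw [hMeq, natDegree_C_mul hane, natDegree_pow]
      have : ((X : Polynomial (ZMod p)) - 1) = X - C 1 := by rw [map_one]
      rw [this, natDegree_X_sub_C, mul_one]
    exact ⟨a, hane, by rw [hdM]; exact hMeq⟩
  · rintro ⟨a, ha, hMeq⟩
    set d := M.natDegree with hd
    have haU : IsUnit (C a : Polynomial (ZMod p)) := isUnit_C.mpr ha.isUnit
    have hdle : d ≤ p ^ d := le_of_lt (Nat.lt_pow_self hp.one_lt : d < p ^ d)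
    have hdvd : M ∣ ((X : Polynomial (ZMod p)) - 1) ^ p ^ d := by
      rw [hMeq]
      exact haU.mul_left_dvd.mpr (pow_dvd_pow _ hdle)
    have h1 : (Ideal.Quotient.mk (Ideal.span {M}) (X : Polynomial (ZMod p))) ^ p ^ d = 1 := by
      rw [key]
      rw [← hfrob]
      exact hdvd
    have hu : IsUnit (Ideal.Quotient.mk (Ideal.span {M}) (X : Polynomial (ZMod p))) :=
      IsUnit.of_pow_eq_one h1 (pow_ne_zero d hp.ne_zero)
    have hdvd2 : orderOf (Ideal.Quotient.mk (Ideal.span {M}) (X : Polynomial (ZMod p))) ∣ p ^ d :=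
      orderOf_dvd_of_pow_eq_one h1
    obtain ⟨i, _, hi⟩ := (Nat.dvd_prime_pow hp).mp hdvd2
    exact ⟨hu, i, hi⟩
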